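/- Let 0 < ρ < 1 and let α ∈ (0,1) be the unique solution of x^x (1−x)^{1−x} = ρ^x. Then lim_{N→∞} E(H_N)/N = α. -/

import Mathlib

open Finset Filter Real Topology

/-- `r_{ρ,n}(i) = ρ^{-i} * C(n-1, i)^{-1}`. -/
noncomputable def rfun (ρ : ℝ) (n i : ℕ) : ℝ := (ρ ^ i * (Nat.choose (n - 1) i : ℝ))⁻¹

/-- `P(H_N ≥ k)` for `k = 1,…,N`, and `0` for `k > N`. -/
noncomputable def tailP (ρ : ℝ) (N k : ℕ) : ℝ :=
  if k ≤ N then (∑ i ∈ Finset.range k, rfun ρ N i)⁻¹ else 0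

/-- `P(H_N = k) = P(H_N ≥ k) − P(H_N ≥ k+1)`. -/
noncomputable def pmfP (ρ : ℝ) (N k : ℕ) : ℝ := tailP ρ N k - tailP ρ N (k + 1)

/-- `E(H_N) = ∑_{k=1}^N P(H_N ≥ k)`. -/
noncomputable def EH (ρ : ℝ) (N : ℕ) : ℝ := ∑ k ∈ Finset.Icc 1 N, tailP ρ N k

/-- `Var(H_N) = ∑_{k=1}^N (k − E(H_N))² P(H_N = k)`. -/
noncomputable def VarH (ρ : ℝ) (N : ℕ) : ℝ :=
  ∑ k ∈ Finset.Icc 1 N, ((k : ℝ) - EH ρ N) ^ 2 * pmfP ρ N k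

/-- `P(H_N ≤ t)` for a real threshold `t`. -/
noncomputable def cdfP (ρ : ℝ) (N : ℕ) (t : ℝ) : ℝ :=
  ∑ k ∈ (Finset.Icc 1 N).filter (fun k : ℕ => (k : ℝ) ≤ t), pmfP ρ N k


lemma pow_mul_factorial_le {n i : ℕ} (h : i ≤ n) :
    n ^ i * i.factorial ≤ i ^ i * n.descFactorial i := by
  rw [Nat.descFactorial_eq_prod_range]
  have h1 : n ^ i * i.factorial = ∏ j ∈ range i, (n * (i - j)) := by
    rw [Finset.prod_mul_distrib, Finset.prod_const]
    congr 1
    · simp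
    · rw [← Finset.prod_range_add_one_eq_factorial, ← Finset.prod_range_reflect]
      apply Finset.prod_congr rfl
      intro j hj
      simp only [Finset.mem_range] at hj
      omega
  have h2 : i ^ i * ∏ j ∈ range i, (n - j) = ∏ j ∈ range i, (i * (n - j)) := by
    rw [Finset.prod_mul_distrib, Finset.prod_const]
    simp
  rw [h1, h2]
  apply Finset.prod_le_prod'
  intro j hj
  simp only [Finset.mem_range] at hj
  have h1 : j ≤ i := hj.le
  have h2 : j ≤ n := h1.trans h
  zify [h1, h2]
  nlinarith [hj, h]

lemma pow_le_mul_choose {n i : ℕ} (h : i ≤ n) : n ^ i ≤ i ^ i * n.choose i := by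
  have h1 := pow_mul_factorial_le h
  rw [Nat.descFactorial_eq_factorial_mul_choose] at h1
  have h2 : i ^ i * (i.factorial * n.choose i) = i ^ i * n.choose i * i.factorial := by ring
  rw [h2] at h1
  exact Nat.le_of_mul_le_mul_right h1 (Nat.factorial_pos i)

lemma choose_term_le_one {n i : ℕ} (hi : i ≤ n) {p q : ℝ} (hp : 0 ≤ p) (hq : 0 ≤ q)
    (hpq : p + q = 1) : (n.choose i : ℝ) * p ^ i * q ^ (n - i) ≤ 1 := by
  have h := add_pow p q n
  have hmem : i ∈ Finset.range (n + 1) := by simp; omega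
  calc (n.choose i : ℝ) * p ^ i * q ^ (n - i) = p ^ i * q ^ (n - i) * (n.choose i : ℝ) := by ring
    _ ≤ ∑ k ∈ range (n + 1), p ^ k * q ^ (n - k) * (n.choose k : ℝ) :=
        Finset.single_le_sum (f := fun k => p ^ k * q ^ (n - k) * (n.choose k : ℝ)) (fun k _ => by positivity) hmem
    _ = (p + q) ^ n := h.symm
    _ = 1 := by rw [hpq, one_pow]

lemma one_le_succ_mul_term {n i : ℕ} (hn : 0 < n) (hi : i ≤ n) :
    1 ≤ ((n : ℝ) + 1) *
      ((n.choose i : ℝ) * ((i : ℝ) / n) ^ i * ((1 : ℝ) - (i : ℝ) / n) ^ (n - i)) := by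
  have hn0 : (n : ℝ) ≠ 0 := Nat.cast_ne_zero.2 hn.ne'
  rcases Nat.eq_zero_or_pos i with hi0 | hipos
  · subst hi0
    simp only [Nat.choose_zero_right, Nat.cast_one, pow_zero, Nat.cast_zero, zero_div,
      sub_zero, one_pow, mul_one, one_mul, Nat.sub_zero]
    nlinarith [show (0:ℝ) < n by exact_mod_cast hn]
  rcases eq_or_lt_of_le hi with hin | hin
  · subst hin
    rw [div_self hn0]
    simp only [Nat.choose_self, Nat.cast_one, one_pow, sub_self, Nat.sub_self, pow_zero,
      mul_one, one_mul]
    nlinarith [show (0:ℝ) < i by exact_mod_cast hn]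
  -- now 0 < i < n
  set p : ℝ := (i : ℝ) / n with hp_def
  set q : ℝ := 1 - p with hq_def
  have hp : 0 < p := by positivity
  have hq : 0 < q := by
    rw [hq_def, hp_def, sub_pos, div_lt_one (by positivity)]
    exact_mod_cast hin
  have hpq : p + q = 1 := by rw [hq_def]; ring
  set t : ℕ → ℝ := fun j => (n.choose j : ℝ) * p ^ j * q ^ (n - j) with ht_def
  have ht_nonneg : ∀ j, 0 ≤ t j := fun j => by positivity
  have hcast : ((n - i : ℕ) : ℝ) = (n : ℝ) - i := by
    push_cast [hi]; ring
  have hqval : q = ((n : ℝ) - i) / n := by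
    rw [hq_def, hp_def]; field_simp
  have up : ∀ j, j < i → t j ≤ t (j + 1) := by
    intro j hj
    have hnat : n.choose j * (n - i) ≤ n.choose (j + 1) * i := by
      have h1 : n.choose (j + 1) * (j + 1) = n.choose j * (n - j) := Nat.choose_succ_right_eq n j
      have h2 : n.choose j * (n - i) * (j + 1) ≤ n.choose (j + 1) * i * (j + 1) := by
        calc n.choose j * (n - i) * (j + 1) = n.choose j * ((n - i) * (j + 1)) := by ring
          _ ≤ n.choose j * ((n - j) * i) :=
              Nat.mul_le_mul_left _ (Nat.mul_le_mul (by omega) (by omega))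
          _ = n.choose j * (n - j) * i := by ring
          _ = n.choose (j + 1) * (j + 1) * i := by rw [h1]
          _ = n.choose (j + 1) * i * (j + 1) := by ring
      exact Nat.le_of_mul_le_mul_right h2 (by omega)
    have hreal : (n.choose j : ℝ) * q ≤ (n.choose (j + 1) : ℝ) * p := by
      rw [hqval, hp_def, ← mul_div_assoc, ← mul_div_assoc, div_le_div_iff_of_pos_right (by positivity)]
      calc (n.choose j : ℝ) * ((n : ℝ) - i) = ((n.choose j * (n - i) : ℕ) : ℝ) := by
            push_cast [hi]; ring
        _ ≤ ((n.choose (j + 1) * i : ℕ) : ℝ) := by exact_mod_cast hnat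
        _ = (n.choose (j + 1) : ℝ) * i := by push_cast; ring
    have hsub : n - j = (n - (j + 1)) + 1 := by omega
    calc t j = ((n.choose j : ℝ) * q) * (p ^ j * q ^ (n - (j + 1))) := by
          rw [ht_def]; simp only []; rw [hsub, pow_succ]; ring
      _ ≤ ((n.choose (j + 1) : ℝ) * p) * (p ^ j * q ^ (n - (j + 1))) := by
          apply mul_le_mul_of_nonneg_right hreal (by positivity)
      _ = t (j + 1) := by rw [ht_def]; simp only []; rw [pow_succ]; ring
  have down : ∀ j, i ≤ j → t (j + 1) ≤ t j := by
    intro j hj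
    rcases lt_or_ge j n with hjn | hjn
    · have hnat : n.choose (j + 1) * i ≤ n.choose j * (n - i) := by
        have h1 : n.choose (j + 1) * (j + 1) = n.choose j * (n - j) := Nat.choose_succ_right_eq n j
        have h2 : n.choose (j + 1) * i * (j + 1) ≤ n.choose j * (n - i) * (j + 1) := by
          calc n.choose (j + 1) * i * (j + 1) = n.choose (j + 1) * (j + 1) * i := by ring
            _ = n.choose j * (n - j) * i := by rw [h1]
            _ = n.choose j * ((n - j) * i) := by ring
            _ ≤ n.choose j * ((n - i) * (j + 1)) :=
                Nat.mul_le_mul_left _ (Nat.mul_le_mul (by omega) (by omega))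
            _ = n.choose j * (n - i) * (j + 1) := by ring
        exact Nat.le_of_mul_le_mul_right h2 (by omega)
      have hreal : (n.choose (j + 1) : ℝ) * p ≤ (n.choose j : ℝ) * q := by
        rw [hqval, hp_def, ← mul_div_assoc, ← mul_div_assoc,
          div_le_div_iff_of_pos_right (by positivity)]
        calc (n.choose (j + 1) : ℝ) * (i : ℝ) = ((n.choose (j + 1) * i : ℕ) : ℝ) := by push_cast; ring
          _ ≤ ((n.choose j * (n - i) : ℕ) : ℝ) := by exact_mod_cast hnat
          _ = (n.choose j : ℝ) * ((n : ℝ) - i) := by push_cast [hi]; ring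
      have hsub : n - j = (n - (j + 1)) + 1 := by omega
      calc t (j + 1) = ((n.choose (j + 1) : ℝ) * p) * (p ^ j * q ^ (n - (j + 1))) := by
            rw [ht_def]; simp only []; rw [pow_succ]; ring
        _ ≤ ((n.choose j : ℝ) * q) * (p ^ j * q ^ (n - (j + 1))) := by
            apply mul_le_mul_of_nonneg_right hreal (by positivity)
        _ = t j := by rw [ht_def]; simp only []; rw [hsub, pow_succ]; ring
    · have : n.choose (j + 1) = 0 := Nat.choose_eq_zero_of_lt (by omega)
      have h0 : t (j + 1) = 0 := by rw [ht_def]; simp [this]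
      rw [h0]; exact ht_nonneg j
  have below : ∀ k, t (i - k) ≤ t i := by
    intro k
    induction k with
    | zero => simp
    | succ k ih =>
      by_cases hk : k < i
      · have h1 : i - (k + 1) < i := by omega
        have h2 : i - (k + 1) + 1 = i - k := by omega
        calc t (i - (k + 1)) ≤ t (i - (k + 1) + 1) := up _ h1
          _ = t (i - k) := by rw [h2]
          _ ≤ t i := ih
      · have h3 : i - (k + 1) = i - k := by omega
        rw [h3]; exact ih
  have above : ∀ k, t (i + k) ≤ t i := by
    intro k
    induction k with
    | zero => simp
    | succ k ih =>
      have : i + (k + 1) = (i + k) + 1 := by omega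
      rw [this]
      exact (down _ (by omega)).trans ih
  have hmax : ∀ j, t j ≤ t i := by
    intro j
    rcases le_total j i with hji | hij
    · have : j = i - (i - j) := by omega
      rw [this]; exact below _
    · have : j = i + (j - i) := by omega
      rw [this]; exact above _
  have hsum : (1 : ℝ) = ∑ j ∈ range (n + 1), t j := by
    have h := add_pow p q n
    rw [hpq, one_pow] at h
    rw [h]
    apply Finset.sum_congr rfl
    intro j _
    rw [ht_def]; ring
  have hle : ∑ j ∈ range (n + 1), t j ≤ (n + 1) * t i := by
    have := Finset.sum_le_card_nsmul (range (n + 1)) t (t i) (fun j _ => hmax j)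
    simpa [nsmul_eq_mul, Finset.card_range] using this
  calc (1 : ℝ) = ∑ j ∈ range (n + 1), t j := hsum
    _ ≤ (n + 1) * t i := hle
    _ = ((n : ℝ) + 1) * ((n.choose i : ℝ) * p ^ i * q ^ (n - i)) := by push_cast; ring

noncomputable def gfun (ρ x : ℝ) : ℝ :=
  x * Real.log ρ - x * Real.log x - (1 - x) * Real.log (1 - x)

lemma gfun_continuous (ρ : ℝ) : Continuous (gfun ρ) := by
  unfold gfun
  apply Continuous.sub
  apply Continuous.sub
  · exact continuous_id.mul continuous_const
  · exact Real.continuous_mul_log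
  · exact Real.continuous_mul_log.comp (continuous_const.sub continuous_id)

lemma gfun_eq_zero_iff {ρ x : ℝ} (hρ0 : 0 < ρ) (hx : x ∈ Set.Ioo (0 : ℝ) 1) :
    gfun ρ x = 0 ↔ x ^ x * (1 - x) ^ (1 - x) = ρ ^ x := by
  obtain ⟨hx0, hx1⟩ := hx
  have h1x : (0 : ℝ) < 1 - x := by linarith
  rw [Real.rpow_def_of_pos hx0, Real.rpow_def_of_pos h1x, Real.rpow_def_of_pos hρ0,
    ← Real.exp_add]
  rw [Real.exp_eq_exp]
  unfold gfun
  constructor <;> intro h <;> nlinarith [h]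

lemma gfun_pos_small {ρ x : ℝ} (hρ1 : ρ < 1) (hx0 : 0 < x) (hxρ : x ≤ ρ) : 0 < gfun ρ x := by
  have hx1 : x < 1 := lt_of_le_of_lt hxρ hρ1
  have h1 : Real.log x ≤ Real.log ρ := Real.log_le_log hx0 hxρ
  have h2 : Real.log (1 - x) < 0 := Real.log_neg (by linarith) (by linarith)
  unfold gfun
  nlinarith
lemma gfun_one {ρ : ℝ} : gfun ρ 1 = Real.log ρ := by
  unfold gfun; simp

section
variable {ρ α : ℝ} (hρ0 : 0 < ρ) (hρ1 : ρ < 1) (hα : α ∈ Set.Ioo (0 : ℝ) 1)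
  (hsol : α ^ α * (1 - α) ^ (1 - α) = ρ ^ α)
  (huniq : ∀ x ∈ Set.Ioo (0 : ℝ) 1, x ^ x * (1 - x) ^ (1 - x) = ρ ^ x → x = α)

include hρ0 hα hsol in
lemma gfun_alpha : gfun ρ α = 0 := (gfun_eq_zero_iff hρ0 hα).2 hsol

include hρ0 huniq in
lemma gfun_zero_imp {x : ℝ} (hx : x ∈ Set.Ioo (0 : ℝ) 1) (h : gfun ρ x = 0) : x = α :=
  huniq x hx ((gfun_eq_zero_iff hρ0 hx).1 h)

include hρ0 hρ1 hα hsol huniq in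
lemma alpha_gt_rho : ρ < α := by
  by_contra h
  push_neg at h
  have := gfun_pos_small hρ1 hα.1 h
  rw [gfun_alpha hρ0 hα hsol] at this
  exact lt_irrefl 0 this

include hρ0 hρ1 hα hsol huniq in
lemma gfun_pos_of_lt_alpha {x : ℝ} (hx0 : 0 < x) (hxα : x < α) : 0 < gfun ρ x := by
  by_contra h
  push_neg at h
  rcases eq_or_lt_of_le h with heq | hlt
  · have := gfun_zero_imp hρ0 huniq (x := x) ⟨hx0, hxα.trans hα.2⟩ heq
    linarith
  · set y := min x ρ / 2 with hy_def
    have hy0 : 0 < y := by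
      apply div_pos _ two_pos
      exact lt_min hx0 hρ0
    have hyx : y < x := by
      have : min x ρ ≤ x := min_le_left _ _
      rw [hy_def]; linarith
    have hyρ : y ≤ ρ := by
      have : min x ρ ≤ ρ := min_le_right _ _
      rw [hy_def]; linarith
    have hgy : 0 < gfun ρ y := gfun_pos_small hρ1 hy0 hyρ
    -- IVT on [y, x]
    have hcont : ContinuousOn (gfun ρ) (Set.Icc y x) := (gfun_continuous ρ).continuousOn
    have hmem : (0 : ℝ) ∈ Set.Icc (gfun ρ x) (gfun ρ y) := ⟨hlt.le, hgy.le⟩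
    obtain ⟨c, hc, hc0⟩ := intermediate_value_Icc' hyx.le hcont hmem
    have hcα : c = α := by
      apply gfun_zero_imp hρ0 huniq _ hc0
      constructor
      · exact lt_of_lt_of_le hy0 hc.1
      · exact lt_of_le_of_lt hc.2 (hxα.trans hα.2)
    have : c < α := lt_of_le_of_lt hc.2 hxα
    rw [hcα] at this
    exact lt_irrefl _ this

include hρ0 hρ1 hα hsol huniq in
lemma gfun_neg_of_gt_alpha {x : ℝ} (hxα : α < x) (hx1 : x ≤ 1) : gfun ρ x < 0 := by
  have hgl : gfun ρ 1 < 0 := by rw [gfun_one]; exact Real.log_neg hρ0 hρ1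
  rcases eq_or_lt_of_le hx1 with heq | hlt
  · rw [heq]; exact hgl
  by_contra h
  push_neg at h
  rcases eq_or_lt_of_le h with heq | hpos
  · have := gfun_zero_imp hρ0 huniq (x := x) ⟨(hα.1).trans hxα, hlt⟩ heq.symm
    linarith
  · have hcont : ContinuousOn (gfun ρ) (Set.Icc x 1) := (gfun_continuous ρ).continuousOn
    have hmem : (0 : ℝ) ∈ Set.Icc (gfun ρ 1) (gfun ρ x) := ⟨hgl.le, hpos.le⟩
    obtain ⟨c, hc, hc0⟩ := intermediate_value_Icc' hx1 hcont hmem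
    have hc1 : c < 1 := by
      rcases eq_or_lt_of_le hc.2 with he | hl
      · exfalso; rw [he] at hc0; linarith
      · exact hl
    have hcα : c = α := by
      apply gfun_zero_imp hρ0 huniq _ hc0
      exact ⟨(hα.1).trans (hxα.trans_le hc.1), hc1⟩
    have : α < c := hxα.trans_le hc.1
    rw [hcα] at this
    exact lt_irrefl _ this

include hρ0 hρ1 hα hsol huniq in
lemma exists_min_gfun {a b : ℝ} (ha : 0 < a) (hab : a ≤ b) (hb : b < α) :
    ∃ c : ℝ, 0 < c ∧ ∀ x ∈ Set.Icc a b, c ≤ gfun ρ x := by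
  obtain ⟨z, hz, hzmin⟩ := isCompact_Icc.exists_isMinOn (Set.nonempty_Icc.2 hab)
    ((gfun_continuous ρ).continuousOn)
  refine ⟨gfun ρ z, ?_, fun x hx => hzmin hx⟩
  exact gfun_pos_of_lt_alpha hρ0 hρ1 hα hsol huniq (lt_of_lt_of_le ha hz.1)
    (lt_of_le_of_lt hz.2 hb)

include hρ0 hρ1 hα hsol huniq in
lemma exists_max_gfun {a : ℝ} (ha : α < a) (ha1 : a ≤ 1) :
    ∃ c : ℝ, 0 < c ∧ ∀ x ∈ Set.Icc a 1, gfun ρ x ≤ -c := by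
  obtain ⟨z, hz, hzmax⟩ := isCompact_Icc.exists_isMaxOn (Set.nonempty_Icc.2 ha1)
    ((gfun_continuous ρ).continuousOn)
  refine ⟨-(gfun ρ z), ?_, fun x hx => by simpa using hzmax hx⟩
  have := gfun_neg_of_gt_alpha hρ0 hρ1 hα hsol huniq (lt_of_lt_of_le ha hz.1) hz.2
  linarith

end
section
variable {ρ : ℝ}

lemma exp_n_gfun (hρ0 : 0 < ρ) {n i : ℕ} (hn : 0 < n) (hi : i ≤ n) :
    Real.exp (n * gfun ρ ((i : ℝ) / n)) * (((i : ℝ) / n) ^ i * (1 - (i : ℝ) / n) ^ (n - i))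
      = ρ ^ i := by
  have hn0 : (n : ℝ) ≠ 0 := Nat.cast_ne_zero.2 hn.ne'
  rcases Nat.eq_zero_or_pos i with hi0 | hipos
  · subst hi0
    simp [gfun]
  rcases eq_or_lt_of_le hi with hin | hin
  · subst hin
    rw [div_self hn0]
    simp only [gfun, Real.log_one, mul_zero, sub_self, zero_mul, sub_zero, one_pow,
      Nat.sub_self, pow_zero, mul_one, one_mul]
    rw [Real.exp_nat_mul, Real.exp_log hρ0]
  · set β : ℝ := (i : ℝ) / n with hβ_def
    have hβ0 : 0 < β := by positivity
    have hβ1 : β < 1 := by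
      rw [hβ_def, div_lt_one (by positivity)]
      exact_mod_cast hin
    have h1β : 0 < 1 - β := by linarith
    have hng : (n : ℝ) * gfun ρ β
        = i * Real.log ρ - i * Real.log β - ((n - i : ℕ) : ℝ) * Real.log (1 - β) := by
      have hni : (n : ℝ) * β = i := by
        rw [hβ_def]; field_simp
      unfold gfun
      push_cast [hi]
      linear_combination (Real.log ρ - Real.log β + Real.log (1 - β)) * hni
    rw [hng]
    rw [show (i : ℝ) * Real.log ρ - i * Real.log β - ((n - i : ℕ) : ℝ) * Real.log (1 - β)
        = i * Real.log ρ + (-(i * Real.log β) + -(((n - i : ℕ) : ℝ) * Real.log (1 - β))) by ring]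
    rw [Real.exp_add, Real.exp_add, Real.exp_neg, Real.exp_neg,
      Real.exp_nat_mul, Real.exp_nat_mul, Real.exp_nat_mul,
      Real.exp_log hρ0, Real.exp_log hβ0, Real.exp_log h1β]
    have e1 : β ^ i ≠ 0 := by positivity
    have e2 : (1 - β) ^ (n - i) ≠ 0 := by positivity
    field_simp

lemma rho_pow_mul_choose_le (hρ0 : 0 < ρ) {n i : ℕ} (hn : 0 < n) (hi : i ≤ n) :
    ρ ^ i * (n.choose i : ℝ) ≤ Real.exp (n * gfun ρ ((i : ℝ) / n)) := by
  have h1 := choose_term_le_one hi (p := (i : ℝ) / n) (q := 1 - (i : ℝ) / n)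
    (by positivity) (by
      rw [sub_nonneg, div_le_one (by positivity)]
      exact_mod_cast hi) (by ring)
  have h2 := exp_n_gfun hρ0 hn hi (ρ := ρ)
  calc ρ ^ i * (n.choose i : ℝ)
      = (n.choose i : ℝ) * (Real.exp (n * gfun ρ ((i : ℝ) / n))
          * (((i : ℝ) / n) ^ i * (1 - (i : ℝ) / n) ^ (n - i))) := by rw [h2]; ring
    _ = Real.exp (n * gfun ρ ((i : ℝ) / n))
          * ((n.choose i : ℝ) * ((i : ℝ) / n) ^ i * (1 - (i : ℝ) / n) ^ (n - i)) := by ring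
    _ ≤ Real.exp (n * gfun ρ ((i : ℝ) / n)) * 1 := by
        apply mul_le_mul_of_nonneg_left h1 (Real.exp_nonneg _)
    _ = Real.exp (n * gfun ρ ((i : ℝ) / n)) := mul_one _

lemma inv_rho_pow_mul_choose_le (hρ0 : 0 < ρ) {n i : ℕ} (hn : 0 < n) (hi : i ≤ n) :
    (ρ ^ i * (n.choose i : ℝ))⁻¹
      ≤ ((n : ℝ) + 1) * Real.exp (-((n : ℝ) * gfun ρ ((i : ℝ) / n))) := by
  have hchoose : (0 : ℝ) < (n.choose i : ℝ) := by
    exact_mod_cast Nat.choose_pos hi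
  have hpos : (0 : ℝ) < ρ ^ i * (n.choose i : ℝ) := by positivity
  have h1 := one_le_succ_mul_term hn hi
  have h2 := exp_n_gfun hρ0 hn hi (ρ := ρ)
  rw [inv_le_iff_one_le_mul₀ hpos]
  have key : ((i : ℝ) / n) ^ i * (1 - (i : ℝ) / n) ^ (n - i)
      = ρ ^ i * Real.exp (-((n : ℝ) * gfun ρ ((i : ℝ) / n))) := by
    rw [Real.exp_neg, ← h2]
    have e3 : Real.exp ((n:ℝ) * gfun ρ ((i : ℝ) / n)) ≠ 0 := (Real.exp_pos _).ne'
    field_simp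
  calc (1 : ℝ) ≤ ((n : ℝ) + 1) *
        ((n.choose i : ℝ) * ((i : ℝ) / n) ^ i * (1 - (i : ℝ) / n) ^ (n - i)) := h1
    _ = ((n : ℝ) + 1) * Real.exp (-((n : ℝ) * gfun ρ ((i : ℝ) / n)))
          * (ρ ^ i * (n.choose i : ℝ)) := by
        rw [mul_assoc ((n.choose i : ℝ)), key]; ring

end
section
variable {ρ : ℝ}
lemma rfun_nonneg (hρ0 : 0 < ρ) (N i : ℕ) : 0 ≤ rfun ρ N i := by
  unfold rfun; positivity

lemma rfun_zero (ρ : ℝ) (N : ℕ) : rfun ρ N 0 = 1 := by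
  unfold rfun; simp

lemma one_le_sum_rfun (hρ0 : 0 < ρ) {N k : ℕ} (hk : 1 ≤ k) :
    1 ≤ ∑ i ∈ Finset.range k, rfun ρ N i := by
  have h := Finset.single_le_sum (f := fun i => rfun ρ N i)
    (fun i _ => rfun_nonneg hρ0 N i) (Finset.mem_range.2 hk)
  rwa [rfun_zero] at h

lemma sum_rfun_pos (hρ0 : 0 < ρ) {N k : ℕ} (hk : 1 ≤ k) :
    0 < ∑ i ∈ Finset.range k, rfun ρ N i :=
  lt_of_lt_of_le one_pos (one_le_sum_rfun hρ0 hk)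

lemma tailP_eq {N k : ℕ} (hk : k ≤ N) :
    tailP ρ N k = (∑ i ∈ Finset.range k, rfun ρ N i)⁻¹ := if_pos hk

lemma tailP_nonneg (hρ0 : 0 < ρ) (N k : ℕ) : 0 ≤ tailP ρ N k := by
  unfold tailP
  split
  · exact inv_nonneg.2 (Finset.sum_nonneg fun i _ => rfun_nonneg hρ0 N i)
  · exact le_refl 0
lemma tailP_le_one (hρ0 : 0 < ρ) {N k : ℕ} (hk : 1 ≤ k) : tailP ρ N k ≤ 1 := by
  unfold tailP
  split
  · exact inv_le_one_of_one_le₀ (one_le_sum_rfun hρ0 hk)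
  · linarith

lemma tailP_ge_inv_sum (hρ0 : 0 < ρ) {N k k' : ℕ} (hk1 : 1 ≤ k) (hk : k ≤ k') (hk' : k' ≤ N) :
    (∑ i ∈ Finset.range k', rfun ρ N i)⁻¹ ≤ tailP ρ N k := by
  rw [tailP_eq (hk.trans hk')]
  apply inv_anti₀ (sum_rfun_pos hρ0 hk1)
  apply Finset.sum_le_sum_of_subset_of_nonneg (Finset.range_subset_range.2 hk)
  exact fun i _ _ => rfun_nonneg hρ0 N i

lemma tailP_le_bound (hρ0 : 0 < ρ) {N k : ℕ} (h1 : 1 ≤ k) (h2 : k ≤ N) :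
    tailP ρ N k ≤ ρ ^ (k - 1) * ((N - 1).choose (k - 1) : ℝ) := by
  rw [tailP_eq h2]
  have hck : 0 < ((N - 1).choose (k - 1) : ℝ) := by
    exact_mod_cast Nat.choose_pos (by omega)
  have hpos : 0 < rfun ρ N (k - 1) := by
    unfold rfun
    positivity
  have hterm : rfun ρ N (k - 1) ≤ ∑ i ∈ Finset.range k, rfun ρ N i :=
    Finset.single_le_sum (f := fun i => rfun ρ N i) (fun i _ => rfun_nonneg hρ0 N i)
      (Finset.mem_range.2 (by omega))
  calc (∑ i ∈ Finset.range k, rfun ρ N i)⁻¹ ≤ (rfun ρ N (k - 1))⁻¹ :=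
        inv_anti₀ hpos hterm
    _ = ρ ^ (k - 1) * ((N - 1).choose (k - 1) : ℝ) := by unfold rfun; rw [inv_inv]

lemma sum_geo_le (s : Finset ℕ) : ∑ i ∈ s, (i : ℝ) * (1 / 2) ^ (i - 1) ≤ 4 := by
  have hsummable : Summable (fun n : ℕ => 2 * ((n : ℝ) * (1 / 2) ^ n)) := by
    apply Summable.mul_left
    have := summable_pow_mul_geometric_of_norm_lt_one (R := ℝ) 1 (r := 1 / 2)
      (by rw [norm_of_nonneg (by norm_num)]; norm_num)
    simpa using this
  have hpt : ∀ i : ℕ, (i : ℝ) * (1 / 2) ^ (i - 1) ≤ 2 * ((i : ℝ) * (1 / 2) ^ i) := by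
    intro i
    rcases Nat.eq_zero_or_pos i with h | h
    · subst h; simp
    · have hii : i - 1 + 1 = i := by omega
      apply le_of_eq
      calc (i : ℝ) * (1 / 2) ^ (i - 1) = 2 * ((i : ℝ) * ((1 / 2) ^ (i - 1) * (1 / 2))) := by ring
        _ = 2 * ((i : ℝ) * (1 / 2) ^ (i - 1 + 1)) := by rw [pow_succ]
        _ = 2 * ((i : ℝ) * (1 / 2) ^ i) := by rw [hii]
  calc ∑ i ∈ s, (i : ℝ) * (1 / 2) ^ (i - 1) ≤ ∑ i ∈ s, 2 * ((i : ℝ) * (1 / 2) ^ i) :=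
        Finset.sum_le_sum fun i _ => hpt i
    _ ≤ ∑' i : ℕ, 2 * ((i : ℝ) * (1 / 2) ^ i) := by
        apply Summable.sum_le_tsum s (fun i _ => by positivity) hsummable
    _ = 2 * ((1 / 2) / (1 - 1 / 2) ^ 2) := by
        rw [tsum_mul_left, tsum_coe_mul_geometric_of_norm_lt_one
          (by rw [norm_of_nonneg (by norm_num : (0:ℝ) ≤ 1/2)]; norm_num)]
    _ = 4 := by norm_num

lemma tendsto_cast_sub_one : Tendsto (fun N : ℕ => (N : ℝ) - 1) atTop atTop := by
  have := tendsto_atTop_add_const_right atTop (-1 : ℝ) tendsto_natCast_atTop_atTop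
  simpa [sub_eq_add_neg] using this

lemma tendsto_sq_exp {c : ℝ} (hc : 0 < c) :
    Tendsto (fun N : ℕ => (N : ℝ) ^ 2 * Real.exp (-(c * ((N : ℝ) - 1)))) atTop (𝓝 0) := by
  have h1 : Tendsto (fun x : ℝ => x ^ 2 * Real.exp (-x)) atTop (𝓝 0) :=
    tendsto_pow_mul_exp_neg_atTop_nhds_zero 2
  have h2 : Tendsto (fun N : ℕ => c * (N : ℝ)) atTop atTop :=
    Tendsto.const_mul_atTop hc tendsto_natCast_atTop_atTop
  have h3 := (h1.comp h2).const_mul (Real.exp c / c ^ 2)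
  rw [mul_zero] at h3
  apply h3.congr
  intro N
  simp only [Function.comp_apply]
  rw [show -(c * ((N : ℝ) - 1)) = c + -(c * N) by ring, Real.exp_add]
  field_simp

lemma tendsto_exp_c {c : ℝ} (hc : 0 < c) :
    Tendsto (fun N : ℕ => Real.exp (-(c * ((N : ℝ) - 1)))) atTop (𝓝 0) := by
  apply Real.tendsto_exp_atBot.comp
  exact (tendsto_neg_atTop_atBot).comp (Tendsto.const_mul_atTop hc tendsto_cast_sub_one)

lemma tendsto_four_div (hρ0 : 0 < ρ) :
    Tendsto (fun N : ℕ => 4 / (ρ * ((N : ℝ) - 1))) atTop (𝓝 0) := by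
  have h1 : Tendsto (fun N : ℕ => ρ * ((N : ℝ) - 1)) atTop atTop :=
    Tendsto.const_mul_atTop hρ0 tendsto_cast_sub_one
  have := h1.inv_tendsto_atTop.const_mul (4 : ℝ)
  rw [mul_zero] at this
  apply this.congr
  intro N
  simp [div_eq_mul_inv, Pi.inv_apply]

end

section main
variable {ρ α : ℝ}

lemma EH_upper (hρ0 : 0 < ρ) (hρ1 : ρ < 1) (hα : α ∈ Set.Ioo (0 : ℝ) 1)
    (hsol : α ^ α * (1 - α) ^ (1 - α) = ρ ^ α)
    (huniq : ∀ x ∈ Set.Ioo (0 : ℝ) 1, x ^ x * (1 - x) ^ (1 - x) = ρ ^ x → x = α)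
    {ε : ℝ} (hε : 0 < ε) (hε1 : α + ε ≤ 1) :
    ∀ᶠ N : ℕ in atTop, EH ρ N / N ≤ α + 2 * ε := by
  obtain ⟨c, hc, hcmax⟩ := exists_max_gfun hρ0 hρ1 hα hsol huniq
    (show α < α + ε by linarith) hε1
  have hN1 : ∀ᶠ N : ℕ in atTop, (2 : ℝ) / ε ≤ (N : ℝ) :=
    tendsto_natCast_atTop_atTop.eventually_ge_atTop _
  have hN2 : ∀ᶠ N : ℕ in atTop, Real.exp (-(c * ((N : ℝ) - 1))) < ε / 2 :=
    (tendsto_exp_c hc).eventually_lt_const (by linarith)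
  filter_upwards [eventually_ge_atTop 2, hN1, hN2] with N h2 hNε hexp
  have hαε : 0 < α + ε := by have := hα.1; linarith
  have hNr : (0 : ℝ) < N := by positivity
  set k₀ := ⌈(α + ε) * N⌉₊ with hk₀_def
  have hk₀N : k₀ ≤ N := Nat.ceil_le.2 (by nlinarith)
  have hk₀1 : 1 ≤ k₀ := Nat.ceil_pos.2 (by positivity)
  have hcastn : ((N - 1 : ℕ) : ℝ) = (N : ℝ) - 1 := by
    push_cast [show 1 ≤ N by omega]; ring
  -- sum split
  have hsplit : Finset.Icc 1 N = Finset.Icc 1 k₀ ∪ Finset.Ioc k₀ N := by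
    ext x
    simp only [Finset.mem_Icc, Finset.mem_Ioc, Finset.mem_union]
    omega
  have hdisj : Disjoint (Finset.Icc 1 k₀) (Finset.Ioc k₀ N) := by
    rw [Finset.disjoint_left]
    intro x hx hx'
    simp only [Finset.mem_Icc, Finset.mem_Ioc] at hx hx'
    omega
  have hEH : EH ρ N = ∑ k ∈ Finset.Icc 1 k₀, tailP ρ N k
      + ∑ k ∈ Finset.Ioc k₀ N, tailP ρ N k := by
    rw [EH, hsplit, Finset.sum_union hdisj]
  have hfirst : ∑ k ∈ Finset.Icc 1 k₀, tailP ρ N k ≤ (k₀ : ℝ) := by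
    have := Finset.sum_le_card_nsmul (Finset.Icc 1 k₀) (tailP ρ N) 1
      (fun k hk => tailP_le_one hρ0 (Finset.mem_Icc.1 hk).1)
    simpa [Nat.card_Icc, nsmul_eq_mul] using this
  have hsecond : ∑ k ∈ Finset.Ioc k₀ N, tailP ρ N k ≤ (N : ℝ) * (ε / 2) := by
    have hbound : ∀ k ∈ Finset.Ioc k₀ N, tailP ρ N k ≤ ε / 2 := by
      intro k hk
      obtain ⟨hk1, hk2⟩ := Finset.mem_Ioc.1 hk
      have hk1' : 1 ≤ k := le_trans hk₀1 hk1.le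
      have hn : 0 < N - 1 := by omega
      have hi : k - 1 ≤ N - 1 := by omega
      have hb1 := tailP_le_bound hρ0 hk1' hk2 (ρ := ρ)
      have hb2 := rho_pow_mul_choose_le hρ0 hn hi (ρ := ρ)
      have hcasti : ((k - 1 : ℕ) : ℝ) = (k : ℝ) - 1 := by
        push_cast [show 1 ≤ k by omega]; ring
      have hβmem : ((k - 1 : ℕ) : ℝ) / ((N - 1 : ℕ) : ℝ) ∈ Set.Icc (α + ε) 1 := by
        constructor
        · rw [le_div_iff₀ (by rw [hcastn]; norm_num; exact_mod_cast h2)]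
          have hceil : (α + ε) * N ≤ (k₀ : ℝ) := Nat.le_ceil _
          have hkk : (k₀ : ℝ) ≤ (k : ℝ) - 1 := by
            have : k₀ + 1 ≤ k := hk1
            have := Nat.cast_le (α := ℝ).2 this
            push_cast at this
            linarith
          rw [hcasti, hcastn]
          nlinarith
        · rw [div_le_one (by rw [hcastn]; norm_num; exact_mod_cast h2)]
          exact_mod_cast hi
      have hgle : gfun ρ (((k - 1 : ℕ) : ℝ) / ((N - 1 : ℕ) : ℝ)) ≤ -c := hcmax _ hβmem
      have hb3 : Real.exp (((N - 1 : ℕ) : ℝ) * gfun ρ (((k - 1 : ℕ) : ℝ) / ((N - 1 : ℕ) : ℝ)))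
          ≤ Real.exp (-(c * ((N : ℝ) - 1))) := by
        apply Real.exp_le_exp.2
        have hn1 : (0 : ℝ) ≤ (N : ℝ) - 1 := by
          norm_num; exact_mod_cast (show 1 ≤ N by omega)
        rw [hcastn] at hgle ⊢
        nlinarith [mul_le_mul_of_nonneg_left hgle hn1]
      calc tailP ρ N k ≤ ρ ^ (k - 1) * ((N - 1).choose (k - 1) : ℝ) := hb1
        _ ≤ Real.exp (((N - 1 : ℕ) : ℝ) * gfun ρ (((k - 1 : ℕ) : ℝ) / ((N - 1 : ℕ) : ℝ))) := hb2
        _ ≤ Real.exp (-(c * ((N : ℝ) - 1))) := hb3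
        _ ≤ ε / 2 := hexp.le
    have := Finset.sum_le_card_nsmul (Finset.Ioc k₀ N) (tailP ρ N) (ε / 2) hbound
    have hcard : (Finset.Ioc k₀ N).card = N - k₀ := Nat.card_Ioc k₀ N
    rw [hcard, nsmul_eq_mul] at this
    calc ∑ k ∈ Finset.Ioc k₀ N, tailP ρ N k ≤ ((N - k₀ : ℕ) : ℝ) * (ε / 2) := this
      _ ≤ (N : ℝ) * (ε / 2) := by
        apply mul_le_mul_of_nonneg_right _ (by linarith)
        exact_mod_cast Nat.sub_le N k₀
  have hk₀up : (k₀ : ℝ) ≤ (α + ε) * N + 1 := (Nat.ceil_lt_add_one (by positivity)).le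
  have hfin : EH ρ N ≤ (α + 2 * ε) * N := by
    rw [hEH]
    have h2ε : (2 : ℝ) ≤ ε * N := by
      rw [div_le_iff₀ hε] at hNε
      linarith [hNε]
    nlinarith [hfirst, hsecond]
  rw [div_le_iff₀ hNr]
  exact hfin

set_option maxHeartbeats 2000000 in
lemma EH_lower (hρ0 : 0 < ρ) (hρ1 : ρ < 1) (hα : α ∈ Set.Ioo (0 : ℝ) 1)
    (hsol : α ^ α * (1 - α) ^ (1 - α) = ρ ^ α)
    (huniq : ∀ x ∈ Set.Ioo (0 : ℝ) 1, x ^ x * (1 - x) ^ (1 - x) = ρ ^ x → x = α)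
    {ε : ℝ} (hε : 0 < ε) (hε2 : ε ≤ (α - ρ) / 2) :
    ∀ᶠ N : ℕ in atTop, α - 3 * ε ≤ EH ρ N / N := by
  have hρα : ρ < α := alpha_gt_rho hρ0 hρ1 hα hsol huniq
  have hα1 : α < 1 := hα.2
  have hα0 : 0 < α := hα.1
  have hαερ : ρ / 2 < α - ε := by linarith
  have hd : 0 < (α - ε) - ρ / 2 := by linarith
  obtain ⟨c, hc, hcmin⟩ := exists_min_gfun hρ0 hρ1 hα hsol huniq
    (show (0 : ℝ) < ρ / 2 by linarith) hαερ.le (show α - ε < α by linarith)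
  have hE1 : ∀ᶠ N : ℕ in atTop, 4 / (ρ * ((N : ℝ) - 1)) < ε / 2 :=
    (tendsto_four_div hρ0).eventually_lt_const (by linarith)
  have hE2 : ∀ᶠ N : ℕ in atTop, (N : ℝ) ^ 2 * Real.exp (-(c * ((N : ℝ) - 1))) < ε / 2 :=
    (tendsto_sq_exp hc).eventually_lt_const (by linarith)
  have hE3 : ∀ᶠ N : ℕ in atTop, (2 : ℝ) / ε ≤ (N : ℝ) :=
    tendsto_natCast_atTop_atTop.eventually_ge_atTop _
  have hE4 : ∀ᶠ N : ℕ in atTop, (4 : ℝ) / ((α - ε) - ρ / 2) ≤ (N : ℝ) :=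
    tendsto_natCast_atTop_atTop.eventually_ge_atTop _
  filter_upwards [eventually_ge_atTop 2, hE1, hE2, hE3, hE4] with N h2 hA4 hB2 hεN hE4N
  have hNr : (0 : ℝ) < N := by positivity
  obtain ⟨n, hn_def⟩ : ∃ n : ℕ, n = N - 1 := ⟨_, rfl⟩
  have hn : 0 < n := by omega
  have hcastn : ((n : ℕ) : ℝ) = (N : ℝ) - 1 := by
    rw [hn_def]; push_cast [show 1 ≤ N by omega]; ring
  have hnr : (0 : ℝ) < (n : ℝ) := by rw [hcastn]; norm_num; exact_mod_cast h2
  obtain ⟨k₁, hk₁_def⟩ : ∃ k : ℕ, k = ⌊(α - ε) * N⌋₊ := ⟨_, rfl⟩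
  obtain ⟨m, hm_def⟩ : ∃ m : ℕ, m = ⌊ρ * (n : ℝ) / 2⌋₊ := ⟨_, rfl⟩
  have hm_le : (m : ℝ) ≤ ρ * (n : ℝ) / 2 := by
    rw [hm_def]; exact Nat.floor_le (by positivity)
  have hk₁_le : (k₁ : ℝ) ≤ (α - ε) * N := by
    rw [hk₁_def]; exact Nat.floor_le (mul_nonneg (by linarith) hNr.le)
  have hk₁_gt : (α - ε) * N - 1 < (k₁ : ℝ) := by
    rw [hk₁_def]; exact Nat.sub_one_lt_floor _
  have hk₁N : k₁ ≤ N := by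
    have : (k₁ : ℝ) ≤ (N : ℝ) := by nlinarith
    exact_mod_cast this
  -- from hE4N : N ≥ 4 / d i.e. d * N ≥ 4
  have hdN : 4 ≤ ((α - ε) - ρ / 2) * N := by
    rw [div_le_iff₀ hd] at hE4N; linarith
  have hm1k₁ : m + 1 < k₁ := by
    have h1 : (m : ℝ) + 1 < (k₁ : ℝ) := by
      have : ρ * ((N : ℝ) - 1) / 2 ≤ ρ * (N : ℝ) / 2 := by nlinarith
      rw [hcastn] at hm_le
      nlinarith
    exact_mod_cast h1
  have hmn : m ≤ n := by
    have h1 : (m : ℝ) ≤ (n : ℝ) := by nlinarith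
    exact_mod_cast h1
  obtain ⟨S, hS_def⟩ : ∃ S : ℝ, S = ∑ i ∈ Finset.range k₁, rfun ρ N i := ⟨_, rfl⟩
  have hS1 : 1 ≤ S := by rw [hS_def]; exact one_le_sum_rfun hρ0 (by omega)
  -- splitting S
  have hsplit : S = rfun ρ N 0 + ((∑ i ∈ Finset.Ico 1 (m + 1), rfun ρ N i)
      + ∑ i ∈ Finset.Ico (m + 1) k₁, rfun ρ N i) := by
    rw [hS_def, Finset.range_eq_Ico, Finset.sum_eq_sum_Ico_succ_bot (by omega : 0 < k₁),
      Finset.sum_Ico_consecutive _ (by omega : 1 ≤ m + 1) (by omega : m + 1 ≤ k₁)]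
  -- bound A
  have hA : ∑ i ∈ Finset.Ico 1 (m + 1), rfun ρ N i ≤ 4 / (ρ * ((N : ℝ) - 1)) := by
    have hterm : ∀ i ∈ Finset.Ico 1 (m + 1),
        rfun ρ N i ≤ (1 / (ρ * (n : ℝ))) * ((i : ℝ) * (1 / 2) ^ (i - 1)) := by
      intro i hi
      obtain ⟨hi1, hi2⟩ := Finset.mem_Ico.1 hi
      have him : i ≤ m := by omega
      have hin : i ≤ n := him.trans hmn
      have hix : (i : ℝ) / (ρ * (n : ℝ)) ≤ 1 / 2 := by
        rw [div_le_div_iff₀ (by positivity) (by norm_num)]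
        have : (i : ℝ) ≤ (m : ℝ) := by exact_mod_cast him
        nlinarith
      have hchoosepos : (0 : ℝ) < (n.choose i : ℝ) := by
        exact_mod_cast Nat.choose_pos hin
      have hstep1 : rfun ρ N i ≤ ((i : ℝ) / (ρ * (n : ℝ))) ^ i := by
        have hnat : ((n : ℕ) : ℝ) ^ i ≤ ((i : ℕ) : ℝ) ^ i * (n.choose i : ℝ) := by
          exact_mod_cast pow_le_mul_choose hin
        have hrfun_eq : rfun ρ N i = (ρ ^ i * (n.choose i : ℝ))⁻¹ := by
          rw [rfun, hn_def]
        rw [hrfun_eq, inv_le_iff_one_le_mul₀ (by positivity)]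
        rw [div_pow, mul_pow]
        rw [div_mul_eq_mul_div, le_div_iff₀ (by positivity)]
        calc 1 * (ρ ^ i * (n : ℝ) ^ i) = ρ ^ i * (n : ℝ) ^ i := by ring
          _ ≤ ρ ^ i * ((i : ℝ) ^ i * (n.choose i : ℝ)) := by
              apply mul_le_mul_of_nonneg_left hnat (by positivity)
          _ = (i : ℝ) ^ i * (ρ ^ i * (n.choose i : ℝ)) := by ring
      have hstep2 : ((i : ℝ) / (ρ * (n : ℝ))) ^ i
          ≤ (1 / 2) ^ (i - 1) * ((i : ℝ) / (ρ * (n : ℝ))) := by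
        have hii : i - 1 + 1 = i := by omega
        calc ((i : ℝ) / (ρ * (n : ℝ))) ^ i = ((i : ℝ) / (ρ * (n : ℝ))) ^ (i - 1 + 1) := by
              rw [hii]
          _ = ((i : ℝ) / (ρ * (n : ℝ))) ^ (i - 1) * ((i : ℝ) / (ρ * (n : ℝ))) := by
              rw [pow_succ]
          _ ≤ (1 / 2) ^ (i - 1) * ((i : ℝ) / (ρ * (n : ℝ))) := by
              apply mul_le_mul_of_nonneg_right _ (by positivity)
              exact pow_le_pow_left₀ (by positivity) hix _
      calc rfun ρ N i ≤ (1 / 2) ^ (i - 1) * ((i : ℝ) / (ρ * (n : ℝ))) := hstep1.trans hstep2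
        _ = (1 / (ρ * (n : ℝ))) * ((i : ℝ) * (1 / 2) ^ (i - 1)) := by ring
    calc ∑ i ∈ Finset.Ico 1 (m + 1), rfun ρ N i
        ≤ ∑ i ∈ Finset.Ico 1 (m + 1), (1 / (ρ * (n : ℝ))) * ((i : ℝ) * (1 / 2) ^ (i - 1)) :=
          Finset.sum_le_sum hterm
      _ = (1 / (ρ * (n : ℝ))) * ∑ i ∈ Finset.Ico 1 (m + 1), (i : ℝ) * (1 / 2) ^ (i - 1) := by
          rw [Finset.mul_sum]
      _ ≤ (1 / (ρ * (n : ℝ))) * 4 := by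
          apply mul_le_mul_of_nonneg_left (sum_geo_le _) (by positivity)
      _ = 4 / (ρ * ((N : ℝ) - 1)) := by rw [← hcastn]; ring
  -- bound B
  have hB : ∑ i ∈ Finset.Ico (m + 1) k₁, rfun ρ N i
      ≤ (N : ℝ) ^ 2 * Real.exp (-(c * ((N : ℝ) - 1))) := by
    have hterm : ∀ i ∈ Finset.Ico (m + 1) k₁,
        rfun ρ N i ≤ (N : ℝ) * Real.exp (-(c * ((N : ℝ) - 1))) := by
      intro i hi
      obtain ⟨hi1, hi2⟩ := Finset.mem_Ico.1 hi
      have hin : i ≤ n := by omega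
      have hβmem : (i : ℝ) / (n : ℝ) ∈ Set.Icc (ρ / 2) (α - ε) := by
        constructor
        · rw [le_div_iff₀ hnr]
          have : ρ * (n : ℝ) / 2 < (i : ℝ) := by
            have hmi : ⌊ρ * (n : ℝ) / 2⌋₊ < i := hm_def ▸ (show m < i by omega)
            exact (Nat.floor_lt (by positivity : (0:ℝ) ≤ ρ * (n : ℝ) / 2)).1 hmi
          linarith
        · rw [div_le_iff₀ hnr]
          have hik : (i : ℝ) ≤ (k₁ : ℝ) - 1 := by
            have : i + 1 ≤ k₁ := by omega
            have h' := (Nat.cast_le (α := ℝ)).2 this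
            push_cast at h'
            linarith
          rw [hcastn]
          nlinarith
      have hg : c ≤ gfun ρ ((i : ℝ) / (n : ℝ)) := hcmin _ hβmem
      have hb1 : rfun ρ N i ≤ ((n : ℝ) + 1) * Real.exp (-((n : ℝ) * gfun ρ ((i : ℝ) / n))) := by
        have := inv_rho_pow_mul_choose_le hρ0 hn hin (ρ := ρ)
        rw [rfun, ← hn_def]
        exact this
      have hb2 : Real.exp (-((n : ℝ) * gfun ρ ((i : ℝ) / n))) ≤ Real.exp (-(c * ((N : ℝ) - 1))) := by
        apply Real.exp_le_exp.2
        have hmul : (n : ℝ) * c ≤ (n : ℝ) * gfun ρ ((i : ℝ) / n) :=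
          mul_le_mul_of_nonneg_left hg hnr.le
        have heq : (n : ℝ) * c = c * ((N : ℝ) - 1) := by rw [hcastn]; ring
        linarith
      calc rfun ρ N i ≤ ((n : ℝ) + 1) * Real.exp (-((n : ℝ) * gfun ρ ((i : ℝ) / n))) := hb1
        _ ≤ (N : ℝ) * Real.exp (-(c * ((N : ℝ) - 1))) := by
            apply mul_le_mul (by rw [hcastn]; linarith) hb2 (Real.exp_nonneg _)
              (by positivity)
    calc ∑ i ∈ Finset.Ico (m + 1) k₁, rfun ρ N i
        ≤ (Finset.Ico (m + 1) k₁).card • ((N : ℝ) * Real.exp (-(c * ((N : ℝ) - 1)))) :=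
          Finset.sum_le_card_nsmul _ _ _ hterm
      _ = ((Finset.Ico (m + 1) k₁).card : ℝ) * ((N : ℝ) * Real.exp (-(c * ((N : ℝ) - 1)))) := by
          rw [nsmul_eq_mul]
      _ ≤ (N : ℝ) * ((N : ℝ) * Real.exp (-(c * ((N : ℝ) - 1)))) := by
          apply mul_le_mul_of_nonneg_right _ (by positivity)
          rw [Nat.card_Ico]
          exact_mod_cast le_trans (Nat.sub_le _ _) hk₁N
      _ = (N : ℝ) ^ 2 * Real.exp (-(c * ((N : ℝ) - 1))) := by ring
  have hSle : S ≤ 1 + ε := by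
    rw [hsplit, rfun_zero]
    linarith
  -- lower bound on EH
  have hEH_ge : (k₁ : ℝ) * S⁻¹ ≤ EH ρ N := by
    have h1 : ∀ k ∈ Finset.Icc 1 k₁, S⁻¹ ≤ tailP ρ N k := by
      intro k hk
      obtain ⟨hka, hkb⟩ := Finset.mem_Icc.1 hk
      rw [hS_def]
      exact tailP_ge_inv_sum hρ0 hka hkb hk₁N
    have h2 := Finset.card_nsmul_le_sum (Finset.Icc 1 k₁) (tailP ρ N) S⁻¹ h1
    rw [Nat.card_Icc] at h2
    have h3 : ((k₁ + 1 - 1 : ℕ) : ℝ) * S⁻¹ ≤ ∑ k ∈ Finset.Icc 1 k₁, tailP ρ N k := by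
      rw [← nsmul_eq_mul]
      exact_mod_cast h2
    have h4 : ∑ k ∈ Finset.Icc 1 k₁, tailP ρ N k ≤ EH ρ N := by
      rw [EH]
      apply Finset.sum_le_sum_of_subset_of_nonneg
      · exact Finset.Icc_subset_Icc_right hk₁N
      · exact fun k _ _ => tailP_nonneg hρ0 N k
    calc (k₁ : ℝ) * S⁻¹ = ((k₁ + 1 - 1 : ℕ) : ℝ) * S⁻¹ := by norm_num
      _ ≤ ∑ k ∈ Finset.Icc 1 k₁, tailP ρ N k := h3
      _ ≤ EH ρ N := h4
  -- conclude
  rw [le_div_iff₀ hNr]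
  have hSpos : 0 < S := lt_of_lt_of_le one_pos hS1
  have hSinv : (1 + ε)⁻¹ ≤ S⁻¹ := by
    apply inv_anti₀ hSpos hSle
  have hk₁0 : (0 : ℝ) ≤ (k₁ : ℝ) := Nat.cast_nonneg _
  have hmain : ((α - ε) * N - 1) * (1 + ε)⁻¹ ≤ EH ρ N := by
    calc ((α - ε) * N - 1) * (1 + ε)⁻¹ ≤ (k₁ : ℝ) * (1 + ε)⁻¹ := by
          apply mul_le_mul_of_nonneg_right hk₁_gt.le (by positivity)
      _ ≤ (k₁ : ℝ) * S⁻¹ := mul_le_mul_of_nonneg_left hSinv hk₁0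
      _ ≤ EH ρ N := hEH_ge
  have hεN2 : 2 ≤ ε * N := by
    rw [div_le_iff₀ hε] at hεN
    linarith
  have hfinal : (α - 3 * ε) * N ≤ ((α - ε) * N - 1) * (1 + ε)⁻¹ := by
    rw [← div_eq_mul_inv, le_div_iff₀ (by linarith : (0:ℝ) < 1 + ε)]
    nlinarith [hεN2, hNr.le, hε.le, hα1.le]
  linarith

end main

theorem mean_height_asymptotics_rho_lt_one (ρ α : ℝ) (hρ0 : 0 < ρ) (hρ1 : ρ < 1)
    (hα : α ∈ Set.Ioo (0 : ℝ) 1)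
    (hsol : α ^ α * (1 - α) ^ (1 - α) = ρ ^ α)
    (huniq : ∀ x ∈ Set.Ioo (0 : ℝ) 1, x ^ x * (1 - x) ^ (1 - x) = ρ ^ x → x = α) :
    Tendsto (fun N : ℕ => EH ρ N / N) atTop (𝓝 α) := by
  rw [Metric.tendsto_atTop]
  intro ε₀ hε₀
  have hρα : ρ < α := alpha_gt_rho hρ0 hρ1 hα hsol huniq
  have hα1 : α < 1 := hα.2
  set ε := min (ε₀ / 4) (min ((α - ρ) / 2) ((1 - α) / 2)) with hε_def
  have hεpos : 0 < ε := lt_min (by linarith) (lt_min (by linarith) (by linarith))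
  have hεa : ε ≤ ε₀ / 4 := min_le_left _ _
  have hεb : ε ≤ (α - ρ) / 2 := (min_le_right _ _).trans (min_le_left _ _)
  have hεc : ε ≤ (1 - α) / 2 := (min_le_right _ _).trans (min_le_right _ _)
  have hub := EH_upper hρ0 hρ1 hα hsol huniq hεpos (by linarith : α + ε ≤ 1)
  have hlb := EH_lower hρ0 hρ1 hα hsol huniq hεpos hεb
  rw [eventually_atTop] at hub hlb
  obtain ⟨N₁, hN₁⟩ := hub
  obtain ⟨N₂, hN₂⟩ := hlb
  refine ⟨max N₁ N₂, fun n hn => ?_⟩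
  have h1 := hN₁ n (le_trans (le_max_left _ _) hn)
  have h2 := hN₂ n (le_trans (le_max_right _ _) hn)
  rw [Real.dist_eq, abs_lt]
  constructor <;> linarith
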